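/- Let H be a complex Hilbert space, A a bounded self-adjoint operator on H, and p_ε, q_ε bounded nonnegative self-adjoint operators on H for ε ∈ (0,1]. Suppose u_ε, v_ε : [0,T] → H are C¹ solutions of i u_ε' + A u_ε + p_ε u_ε = 0 and i v_ε' + A v_ε + q_ε v_ε = 0 with initial data u_{0,ε}, v_{0,ε}. Assume: (a) ‖u_{0,ε} - v_{0,ε}‖ ≤ C_k ε^k for all k; (b) ‖p_ε - q_ε‖_{op} ≤ C_k ε^k for all k; (c) sup_{t∈[0,T]} ‖v_ε(t)‖ ≤ C ε^{-N} for some N. Then for every k ∈ ℕ, sup_{t∈[0,T]} ‖u_ε(t) - v_ε(t)‖ ≤ C_k' ε^k. -/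

import Mathlib

lemma gronwall_aux {H : Type*} [NormedAddCommGroup H] [InnerProductSpace ℝ H]
    {T δ : ℝ} (hδ : 0 ≤ δ) {w w' : ℝ → H}
    (hw : ∀ t ∈ Set.Icc (0:ℝ) T, HasDerivAt w (w' t) t)
    (hb : ∀ t ∈ Set.Icc (0:ℝ) T, (inner ℝ (w' t) (w t) : ℝ) ≤ δ * ‖w t‖)
    {t : ℝ} (ht : t ∈ Set.Icc (0:ℝ) T) : ‖w t‖ ≤ ‖w 0‖ + δ * t := by
  refine le_of_forall_pos_le_add fun η hη => ?_
  set φ : ℝ → ℝ := fun s => (inner ℝ (w s) (w s) : ℝ) + η ^ 2 with hφ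
  have hφpos : ∀ s, 0 < φ s := fun s => by
    have : (0:ℝ) ≤ (inner ℝ (w s) (w s) : ℝ) := real_inner_self_nonneg
    positivity
  set ψ : ℝ → ℝ := fun s => Real.sqrt (φ s) with hψ
  have hψpos : ∀ s, 0 < ψ s := fun s => Real.sqrt_pos.2 (hφpos s)
  have hnorm_le : ∀ s, ‖w s‖ ≤ ψ s := fun s => by
    have h1 : ‖w s‖ = Real.sqrt (‖w s‖ ^ 2) := (Real.sqrt_sq (norm_nonneg _)).symm
    rw [hψ, h1]
    apply Real.sqrt_le_sqrt
    show ‖w s‖ ^ 2 ≤ (inner ℝ (w s) (w s) : ℝ) + η ^ 2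
    rw [real_inner_self_eq_norm_sq]
    nlinarith [sq_nonneg η]
  -- derivative of ψ
  have hψd : ∀ s ∈ Set.Icc (0:ℝ) T,
      HasDerivAt ψ (((inner ℝ (w s) (w' s) : ℝ) + (inner ℝ (w' s) (w s) : ℝ)) / (2 * Real.sqrt (φ s))) s := by
    intro s hs
    have h1 : HasDerivAt φ ((inner ℝ (w s) (w' s) : ℝ) + (inner ℝ (w' s) (w s) : ℝ)) s :=
      (HasDerivAt.inner ℝ (hw s hs) (hw s hs)).add_const _
    exact h1.sqrt (ne_of_gt (hφpos s))
  have hψd_le : ∀ s ∈ Set.Icc (0:ℝ) T,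
      ((inner ℝ (w s) (w' s) : ℝ) + (inner ℝ (w' s) (w s) : ℝ)) / (2 * Real.sqrt (φ s)) ≤ δ := by
    intro s hs
    rw [div_le_iff₀ (mul_pos two_pos (Real.sqrt_pos.2 (hφpos s)))]
    have h2 : (inner ℝ (w s) (w' s) : ℝ) = (inner ℝ (w' s) (w s) : ℝ) := real_inner_comm _ _
    have h3 := hb s hs
    have h4 := hnorm_le s
    nlinarith [hψpos s, mul_le_mul_of_nonneg_left h4 hδ]
  -- g = ψ - δ * id is antitone on [0, T]
  set g : ℝ → ℝ := fun s => ψ s - δ * s with hg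
  have hgd : ∀ s ∈ Set.Icc (0:ℝ) T,
      HasDerivAt g (((inner ℝ (w s) (w' s) : ℝ) + (inner ℝ (w' s) (w s) : ℝ)) / (2 * Real.sqrt (φ s)) - δ) s := by
    intro s hs
    have h := (hψd s hs).sub ((hasDerivAt_id s).const_mul δ)
    simp only [mul_one] at h
    exact h
  have hanti : AntitoneOn g (Set.Icc 0 T) := by
    have hTnn : (0:ℝ) ≤ T := ht.1.trans ht.2
    refine antitoneOn_of_deriv_nonpos (convex_Icc 0 T) ?_ ?_ ?_
    · intro s hs
      exact ((hgd s hs).continuousAt).continuousWithinAt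
    · intro s hs
      rw [interior_Icc] at hs
      exact ((hgd s (Set.mem_Icc_of_Ioo hs)).differentiableAt).differentiableWithinAt
    · intro s hs
      rw [interior_Icc] at hs
      have hs' := Set.mem_Icc_of_Ioo hs
      rw [(hgd s hs').deriv]
      linarith [hψd_le s hs']
  have hg0 : g t ≤ g 0 := hanti (Set.left_mem_Icc.2 (ht.1.trans ht.2)) ht ht.1
  have hψt : ψ t ≤ ψ 0 + δ * t := by
    simp only [hg] at hg0
    linarith [hg0]
  have hψ0 : ψ 0 ≤ ‖w 0‖ + η := by
    show Real.sqrt ((inner ℝ (w 0) (w 0) : ℝ) + η ^ 2) ≤ ‖w 0‖ + η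
    rw [real_inner_self_eq_norm_sq]
    have : ‖w 0‖ ^ 2 + η ^ 2 ≤ (‖w 0‖ + η) ^ 2 := by nlinarith [norm_nonneg (w 0), hη.le]
    calc Real.sqrt (‖w 0‖ ^ 2 + η ^ 2) ≤ Real.sqrt ((‖w 0‖ + η) ^ 2) := Real.sqrt_le_sqrt this
      _ = ‖w 0‖ + η := Real.sqrt_sq (by positivity)
  calc ‖w t‖ ≤ ψ t := hnorm_le t
    _ ≤ ψ 0 + δ * t := hψt
    _ ≤ ‖w 0‖ + δ * t + η := by linarith

/-- abstract uniqueness of very weak solutions. -/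
theorem stmt15 {H : Type*} [NormedAddCommGroup H] [InnerProductSpace ℂ H]
    [CompleteSpace H] (T : ℝ) (hT : 0 < T)
    (A : H →L[ℂ] H) (hA : IsSelfAdjoint A)
    (p q : ℝ → H →L[ℂ] H)
    (hpsa : ∀ ε ∈ Set.Ioc (0 : ℝ) 1, IsSelfAdjoint (p ε))
    (hqsa : ∀ ε ∈ Set.Ioc (0 : ℝ) 1, IsSelfAdjoint (q ε))
    (hpnn : ∀ ε ∈ Set.Ioc (0 : ℝ) 1, ∀ x : H, 0 ≤ (inner ℂ ((p ε) x) x : ℂ).re)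
    (hqnn : ∀ ε ∈ Set.Ioc (0 : ℝ) 1, ∀ x : H, 0 ≤ (inner ℂ ((q ε) x) x : ℂ).re)
    (u v u' v' : ℝ → ℝ → H)
    (hu : ∀ ε ∈ Set.Ioc (0 : ℝ) 1, ∀ t ∈ Set.Icc (0 : ℝ) T,
      HasDerivAt (u ε) (u' ε t) t ∧
      Complex.I • u' ε t + A (u ε t) + (p ε) (u ε t) = 0)
    (hv : ∀ ε ∈ Set.Ioc (0 : ℝ) 1, ∀ t ∈ Set.Icc (0 : ℝ) T,
      HasDerivAt (v ε) (v' ε t) t ∧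
      Complex.I • v' ε t + A (v ε t) + (q ε) (v ε t) = 0)
    (hucont : ∀ ε ∈ Set.Ioc (0 : ℝ) 1, ContinuousOn (u' ε) (Set.Icc (0 : ℝ) T))
    (hvcont : ∀ ε ∈ Set.Ioc (0 : ℝ) 1, ContinuousOn (v' ε) (Set.Icc (0 : ℝ) T))
    (hdata : ∀ k : ℕ, ∃ C : ℝ, ∀ ε ∈ Set.Ioc (0 : ℝ) 1,
      ‖u ε 0 - v ε 0‖ ≤ C * ε ^ k)
    (hpot : ∀ k : ℕ, ∃ C : ℝ, ∀ ε ∈ Set.Ioc (0 : ℝ) 1,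
      ‖p ε - q ε‖ ≤ C * ε ^ k)
    (hmod : ∃ N : ℕ, ∃ C : ℝ, ∀ ε ∈ Set.Ioc (0 : ℝ) 1, ∀ t ∈ Set.Icc (0 : ℝ) T,
      ‖v ε t‖ ≤ C * ε ^ (-(N : ℤ))) :
    ∀ k : ℕ, ∃ C : ℝ, ∀ ε ∈ Set.Ioc (0 : ℝ) 1, ∀ t ∈ Set.Icc (0 : ℝ) T,
      ‖u ε t - v ε t‖ ≤ C * ε ^ k := by
  obtain ⟨N, C3, hC3⟩ := hmod
  intro k
  obtain ⟨C1, hC1⟩ := hdata k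
  obtain ⟨C2, hC2⟩ := hpot (k + N)
  have h1 : (1:ℝ) ∈ Set.Ioc (0:ℝ) 1 := ⟨one_pos, le_refl 1⟩
  have hC1nn : 0 ≤ C1 := le_trans (norm_nonneg _) (by simpa using hC1 1 h1)
  have hC2nn : 0 ≤ C2 := le_trans (norm_nonneg _) (by simpa using hC2 1 h1)
  have hC3nn : 0 ≤ C3 := le_trans (norm_nonneg _)
    (by simpa using hC3 1 h1 0 ⟨le_refl 0, hT.le⟩)
  refine ⟨C1 + T * (C2 * C3), fun ε hε t ht => ?_⟩
  have hε0 : (0:ℝ) < ε := hε.1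
  letI : InnerProductSpace ℝ H := InnerProductSpace.complexToReal
  set w : ℝ → H := fun s => u ε s - v ε s with hwdef
  set w' : ℝ → H := fun s => u' ε s - v' ε s with hw'def
  set δ : ℝ := C2 * C3 * ε ^ k with hδdef
  have hδnn : 0 ≤ δ := by positivity
  have hwd : ∀ s ∈ Set.Icc (0:ℝ) T, HasDerivAt w (w' s) s := fun s hs =>
    ((hu ε hε s hs).1).sub ((hv ε hε s hs).1)
  -- imaginary part of ⟪B x, x⟫ vanishes for self-adjoint B
  have him : ∀ (B : H →L[ℂ] H), IsSelfAdjoint B → ∀ x : H,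
      (inner ℂ (B x) x : ℂ).im = 0 := by
    intro B hB x
    have h1 : (inner ℂ (B x) x : ℂ) = starRingEnd ℂ (inner ℂ (B x) x : ℂ) := by
      conv_lhs => rw [← ContinuousLinearMap.isSelfAdjoint_iff'.mp hB]
      rw [ContinuousLinearMap.adjoint_inner_left, ← inner_conj_symm]
    exact Complex.conj_eq_iff_im.mp h1.symm
  have hbound : ∀ s ∈ Set.Icc (0:ℝ) T, (inner ℝ (w' s) (w s) : ℝ) ≤ δ * ‖w s‖ := by
    intro s hs
    have heu := (hu ε hε s hs).2
    have hev := (hv ε hε s hs).2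
    set X : H := A (w s) + (p ε) (w s) + ((p ε) - (q ε)) (v ε s) with hX
    have hIw' : Complex.I • (w' s) = -X := by
      rw [add_assoc] at heu hev
      have e1 : Complex.I • u' ε s = -(A (u ε s) + (p ε) (u ε s)) :=
        eq_neg_of_add_eq_zero_left heu
      have e2 : Complex.I • v' ε s = -(A (v ε s) + (q ε) (v ε s)) :=
        eq_neg_of_add_eq_zero_left hev
      simp only [hX, hw'def, hwdef, smul_sub, e1, e2, map_sub,
        ContinuousLinearMap.sub_apply]
      abel
    have hw' : w' s = Complex.I • X := by
      have h := congrArg (fun y => Complex.I • y) hIw'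
      simp only [smul_smul, Complex.I_mul_I, neg_one_smul, smul_neg] at h
      exact neg_injective h
    have hre : (inner ℝ (w' s) (w s) : ℝ) = ((inner ℂ X (w s) : ℂ)).im := by
      show ((inner ℂ (w' s) (w s) : ℂ)).re = _
      rw [hw', inner_smul_left]
      simp [Complex.mul_re, Complex.conj_I]
    rw [hre]
    have hsplit : (inner ℂ X (w s) : ℂ).im = (inner ℂ (((p ε) - (q ε)) (v ε s)) (w s) : ℂ).im := by
      rw [hX, inner_add_left, inner_add_left, Complex.add_im, Complex.add_im,
        him A hA (w s), him (p ε) (hpsa ε hε) (w s)]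
      ring
    rw [hsplit]
    have hz : (inner ℂ (((p ε) - (q ε)) (v ε s)) (w s) : ℂ).im
        ≤ ‖((p ε) - (q ε)) (v ε s)‖ * ‖w s‖ := by
      refine le_trans (le_abs_self _) (le_trans (Complex.abs_im_le_norm _) ?_)
      exact norm_inner_le_norm _ _
    have hop : ‖((p ε) - (q ε)) (v ε s)‖ ≤ (C2 * ε ^ (k + N)) * (C3 * ε ^ (-(N:ℤ))) := by
      refine le_trans ((p ε - q ε).le_opNorm _) ?_
      exact mul_le_mul (hC2 ε hε) (hC3 ε hε s hs) (norm_nonneg _)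
        (le_trans (norm_nonneg _) (hC2 ε hε))
    have hpow : (ε:ℝ) ^ (k + N) * ε ^ (-(N:ℤ)) = ε ^ k := by
      rw [← zpow_natCast ε (k + N), ← zpow_natCast ε k, ← zpow_add₀ (ne_of_gt hε0)]
      congr 1
      push_cast
      ring
    have heq : (C2 * ε ^ (k + N)) * (C3 * ε ^ (-(N:ℤ))) = δ := by
      rw [hδdef, ← hpow]
      ring
    calc (inner ℂ (((p ε) - (q ε)) (v ε s)) (w s) : ℂ).im
        ≤ ‖((p ε) - (q ε)) (v ε s)‖ * ‖w s‖ := hz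
      _ ≤ (C2 * ε ^ (k + N)) * (C3 * ε ^ (-(N:ℤ))) * ‖w s‖ :=
          mul_le_mul_of_nonneg_right hop (norm_nonneg _)
      _ = δ * ‖w s‖ := by rw [heq]
  have hkey : ‖u ε t - v ε t‖ ≤ ‖u ε 0 - v ε 0‖ + δ * t :=
    gronwall_aux hδnn hwd hbound ht
  have hd0 := hC1 ε hε
  have hδt : δ * t ≤ C2 * C3 * ε ^ k * T :=
    mul_le_mul_of_nonneg_left ht.2 hδnn
  have hεk : (0:ℝ) < ε ^ k := pow_pos hε0 k
  nlinarith [hkey, hd0, hδt]
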